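/- Let 0 ≤ 8√θ < γ ≤ 1/4 and n ≥ 3/γ. Let G be a 2-colored balanced bipartite graph with parts X, Y of size n and δ(G) ≥ (3/4 + γ)n. Suppose X′ ⊆ X, Y′ ⊆ Y satisfy |X′|, |Y′| ≥ (1/2 − γ/8)n and the number of red edges between X′ and Y′ is at most θn². Define X_S = {x ∈ X′ : x has at most |Y′| − n/2 + γn/2 blue neighbors in Y′} and Y_S symmetrically. Then |X_S| ≤ 4θn and |Y_S| ≤ 4θn. -/
import Mathlib

open SimpleGraph Set

noncomputable def eCount {V : Type*} (K : SimpleGraph V) (A B' : Set V) : ℕ :=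
  {p : V × V | p.1 ∈ A ∧ p.2 ∈ B' ∧ K.Adj p.1 p.2}.ncard

noncomputable def dIn {V : Type*} (K : SimpleGraph V) (x : V) (S : Set V) : ℕ :=
  (K.neighborSet x ∩ S).ncard

open scoped Classical in
lemma dIn_eq_card {V : Type*} [Fintype V] (K : SimpleGraph V) (x : V) (S : Set V) :
    dIn K x S = (S.toFinset.filter (K.Adj x)).card := by
  rw [dIn, ← Set.ncard_coe_finset (S.toFinset.filter (K.Adj x))]
  congr 1
  ext y
  simp [and_comm]

open scoped Classical in
lemma eCount_eq_sum {V : Type*} [Fintype V] (K : SimpleGraph V) (A B' : Set V) :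
    eCount K A B' = ∑ x ∈ A.toFinset, dIn K x B' := by
  have h1 : {p : V × V | p.1 ∈ A ∧ p.2 ∈ B' ∧ K.Adj p.1 p.2}
      = ↑((A.toFinset ×ˢ B'.toFinset).filter fun p => K.Adj p.1 p.2) := by
    ext p; simp [and_assoc]
  rw [eCount, h1, Set.ncard_coe_finset, Finset.card_filter, Finset.sum_product]
  refine Finset.sum_congr rfl fun x _ => ?_
  rw [dIn_eq_card, Finset.card_filter]

open scoped Classical in
lemma eCount_eq_sum' {V : Type*} [Fintype V] (K : SimpleGraph V) (A B' : Set V) :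
    eCount K A B' = ∑ y ∈ B'.toFinset, dIn K y A := by
  have h1 : {p : V × V | p.1 ∈ A ∧ p.2 ∈ B' ∧ K.Adj p.1 p.2}
      = ↑((A.toFinset ×ˢ B'.toFinset).filter fun p => K.Adj p.1 p.2) := by
    ext p; simp [and_assoc]
  rw [eCount, h1, Set.ncard_coe_finset, Finset.card_filter, Finset.sum_product]
  rw [Finset.sum_comm]
  refine Finset.sum_congr rfl fun y _ => ?_
  rw [dIn_eq_card, Finset.card_filter]
  refine Finset.sum_congr rfl fun x _ => ?_
  simp [K.adj_comm]

open scoped Classical in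
lemma sum_bound {V : Type*} [Fintype V] (G R B : SimpleGraph V)
    (hcol : R ⊔ B = G) (γ : ℝ) (hγ0 : 0 ≤ γ) (n : ℕ)
    (S T W : Set V) (hTW : T ⊆ W) (hW : (W.ncard : ℝ) = n)
    (hNbr : ∀ x ∈ S, G.neighborSet x ⊆ W)
    (hdeg : ∀ x, (3/4 + γ) * n ≤ ((G.neighborSet x).ncard : ℝ)) :
    (({x ∈ S | (dIn B x T : ℝ) ≤ (T.ncard : ℝ) - n/2 + γ * n/2}.ncard : ℝ)) * (n/4)
      ≤ ∑ x ∈ S.toFinset, (dIn R x T : ℝ) := by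
  set SS := {x ∈ S | (dIn B x T : ℝ) ≤ (T.ncard : ℝ) - n/2 + γ * n/2} with hSS
  have hsub : SS ⊆ S := fun x hx => hx.1
  have hkey : ∀ x ∈ SS.toFinset, (n:ℝ)/4 ≤ (dIn R x T : ℝ) := by
    intro x hx
    rw [Set.mem_toFinset] at hx
    obtain ⟨hxS, hB⟩ := hx
    have hNW : G.neighborSet x ⊆ W := hNbr x hxS
    -- |N ∩ T| ≥ |N| + |T| - n
    have h1 : (G.neighborSet x ∪ T).ncard + (G.neighborSet x ∩ T).ncard
        = (G.neighborSet x).ncard + T.ncard :=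
      Set.ncard_union_add_ncard_inter _ _ (Set.toFinite _) (Set.toFinite _)
    have h2 : (G.neighborSet x ∪ T).ncard ≤ W.ncard :=
      Set.ncard_le_ncard (Set.union_subset hNW hTW) (Set.toFinite _)
    -- split into colors
    have hsplit : G.neighborSet x ∩ T ⊆ (R.neighborSet x ∩ T) ∪ (B.neighborSet x ∩ T) := by
      intro y hy
      rcases hy with ⟨hy1, hy2⟩
      rw [← hcol] at hy1
      rcases hy1 with h | h
      · exact Or.inl ⟨h, hy2⟩
      · exact Or.inr ⟨h, hy2⟩
    have h3 : (G.neighborSet x ∩ T).ncard ≤ dIn R x T + dIn B x T := by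
      calc (G.neighborSet x ∩ T).ncard
        ≤ ((R.neighborSet x ∩ T) ∪ (B.neighborSet x ∩ T)).ncard :=
          Set.ncard_le_ncard hsplit (Set.toFinite _)
        _ ≤ dIn R x T + dIn B x T := Set.ncard_union_le _ _
    have hd := hdeg x
    have h1' : ((G.neighborSet x ∪ T).ncard : ℝ) + ((G.neighborSet x ∩ T).ncard : ℝ)
        = ((G.neighborSet x).ncard : ℝ) + (T.ncard : ℝ) := by exact_mod_cast h1
    have h2' : ((G.neighborSet x ∪ T).ncard : ℝ) ≤ (n : ℝ) := by
      rw [← hW]; exact_mod_cast h2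
    have h3' : ((G.neighborSet x ∩ T).ncard : ℝ) ≤ (dIn R x T : ℝ) + (dIn B x T : ℝ) := by
      exact_mod_cast h3
    nlinarith [hd, hB]
  have hstep : (SS.toFinset.card : ℝ) * ((n:ℝ)/4) ≤ ∑ x ∈ SS.toFinset, (dIn R x T : ℝ) := by
    have := Finset.card_nsmul_le_sum SS.toFinset (fun x => (dIn R x T : ℝ)) ((n:ℝ)/4) hkey
    simpa [nsmul_eq_mul] using this
  have hmono : ∑ x ∈ SS.toFinset, (dIn R x T : ℝ) ≤ ∑ x ∈ S.toFinset, (dIn R x T : ℝ) := by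
    refine Finset.sum_le_sum_of_subset_of_nonneg ?_ (fun x _ _ => by positivity)
    intro x hx
    rw [Set.mem_toFinset] at hx ⊢
    exact hsub hx
  have hcard : (SS.ncard : ℝ) = (SS.toFinset.card : ℝ) := by
    rw [Set.ncard_eq_toFinset_card']
  rw [hcard]
  exact hstep.trans hmono

theorem small_blue_degree_sets (θ γ : ℝ) (n : ℕ)
    (hθ : 0 ≤ θ) (hθγ : 8 * Real.sqrt θ < γ) (hγ : γ ≤ 1 / 4)
    (hn : 3 / γ ≤ (n : ℝ))
    (G R B : SimpleGraph (Fin n ⊕ Fin n))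
    (hbip : G ≤ completeBipartiteGraph (Fin n) (Fin n))
    (hcol : R ⊔ B = G)
    (hdeg : ∀ v, (3 / 4 + γ) * n ≤ ((G.neighborSet v).ncard : ℝ))
    (X' Y' : Set (Fin n ⊕ Fin n))
    (hX' : X' ⊆ Set.range Sum.inl) (hY' : Y' ⊆ Set.range Sum.inr)
    (hX'card : (1 / 2 - γ / 8) * n ≤ (X'.ncard : ℝ))
    (hY'card : (1 / 2 - γ / 8) * n ≤ (Y'.ncard : ℝ))
    (hred : (eCount R X' Y' : ℝ) ≤ θ * n ^ 2) :
    (({x ∈ X' | (dIn B x Y' : ℝ) ≤ (Y'.ncard : ℝ) - n / 2 + γ * n / 2}.ncard : ℕ) : ℝ)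
      ≤ 4 * θ * n ∧
    (({y ∈ Y' | (dIn B y X' : ℝ) ≤ (X'.ncard : ℝ) - n / 2 + γ * n / 2}.ncard : ℕ) : ℝ)
      ≤ 4 * θ * n := by
  classical
  have hγ0 : 0 ≤ γ := le_of_lt (lt_of_le_of_lt (by positivity) hθγ)
  have hγpos : 0 < γ := lt_of_le_of_lt (by positivity) hθγ
  have hnpos : (0:ℝ) < n := lt_of_lt_of_le (by positivity) hn
  have hWr : ((Set.range (Sum.inr : Fin n → Fin n ⊕ Fin n)).ncard : ℝ) = n := by
    rw [Set.ncard_eq_toFinset_card']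
    simp [Set.toFinset_range]
    rw [Finset.card_image_of_injective _ Sum.inr_injective]
    simp
  have hWl : ((Set.range (Sum.inl : Fin n → Fin n ⊕ Fin n)).ncard : ℝ) = n := by
    rw [Set.ncard_eq_toFinset_card']
    simp [Set.toFinset_range]
    rw [Finset.card_image_of_injective _ Sum.inl_injective]
    simp
  have hNl : ∀ x ∈ X', G.neighborSet x ⊆ Set.range Sum.inr := by
    intro x hx y hy
    obtain ⟨a, rfl⟩ := hX' hx
    have := hbip hy
    rcases y with b | b
    · simp at this
    · exact ⟨b, rfl⟩
  have hNr : ∀ y ∈ Y', G.neighborSet y ⊆ Set.range Sum.inl := by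
    intro y hy z hz
    obtain ⟨a, rfl⟩ := hY' hy
    have := hbip hz
    rcases z with b | b
    · exact ⟨b, rfl⟩
    · simp at this
  have hsum1 := sum_bound G R B hcol γ hγ0 n X' Y' (Set.range Sum.inr) hY' hWr hNl hdeg
  have hsum2 := sum_bound G R B hcol γ hγ0 n Y' X' (Set.range Sum.inl) hX' hWl hNr hdeg
  have he1 : (eCount R X' Y' : ℝ) = ∑ x ∈ X'.toFinset, (dIn R x Y' : ℝ) := by
    rw [eCount_eq_sum]; push_cast; ring
  have he2 : (eCount R X' Y' : ℝ) = ∑ y ∈ Y'.toFinset, (dIn R y X' : ℝ) := by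
    rw [eCount_eq_sum']; push_cast; ring
  constructor
  · have h := hsum1.trans (le_of_eq he1.symm) |>.trans hred
    nlinarith [h, hnpos, Nat.cast_nonneg (α := ℝ) ({x ∈ X' | (dIn B x Y' : ℝ) ≤ (Y'.ncard : ℝ) - n / 2 + γ * n / 2}.ncard)]
  · have h := hsum2.trans (le_of_eq he2.symm) |>.trans hred
    nlinarith [h, hnpos, Nat.cast_nonneg (α := ℝ) ({y ∈ Y' | (dIn B y X' : ℝ) ≤ (X'.ncard : ℝ) - n / 2 + γ * n / 2}.ncard)]
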